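/- Let A be Hurwitz and P̂ the unique symmetric positive definite solution of AᵀP̂ + P̂A = −I. For any symmetric positive definite Q with solution P of AᵀP + PA = −Q, the ratio λ_max(P)/λ_min(Q) is at least λ_max(P̂); i.e., λ_max(P̂) ≤ λ_max(P)/λ_min(Q). -/

import Mathlib

open Matrix

variable {n : ℕ}

def qf (M : Matrix (Fin n) (Fin n) ℝ) (v : Fin n → ℝ) : ℝ := v ⬝ᵥ (M *ᵥ v)

def sph (n : ℕ) : Set (Fin n → ℝ) := {v | v ⬝ᵥ v = 1}

lemma qf_continuous (M : Matrix (Fin n) (Fin n) ℝ) : Continuous (qf M) := by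
  unfold qf dotProduct mulVec
  exact continuous_finset_sum _ fun i _ => (continuous_apply i).mul
    (continuous_finset_sum _ fun j _ => (continuous_const.mul (continuous_apply j)))

lemma sph_nonempty [NeZero n] : (sph n).Nonempty := by
  have hn : 0 < n := Nat.pos_of_ne_zero (NeZero.ne n)
  refine ⟨Pi.single ⟨0, hn⟩ 1, ?_⟩
  simp [sph, dotProduct, Pi.single_apply]

lemma sph_abs_le {v : Fin n → ℝ} (hv : v ∈ sph n) (i : Fin n) : |v i| ≤ 1 := by
  have h1 : v i * v i ≤ 1 := by
    rw [show (1:ℝ) = v ⬝ᵥ v from hv.symm]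
    exact Finset.single_le_sum (f := fun j => v j * v j)
      (fun j _ => mul_self_nonneg _) (Finset.mem_univ i)
  nlinarith [abs_nonneg (v i), sq_abs (v i)]

lemma sph_compact : IsCompact (sph n) := by
  have hc : IsClosed (sph n) := isClosed_eq
    (continuous_finset_sum _ fun i _ => (continuous_apply i).mul (continuous_apply i))
    continuous_const
  refine IsCompact.of_isClosed_subset (isCompact_closedBall (0 : Fin n → ℝ) 1) hc ?_
  intro v hv
  rw [Metric.mem_closedBall, dist_zero_right]
  exact (pi_norm_le_iff_of_nonneg zero_le_one).mpr fun i => by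
    simpa [Real.norm_eq_abs] using sph_abs_le hv i

lemma qf_abs_le {M : Matrix (Fin n) (Fin n) ℝ} {v : Fin n → ℝ} (hv : v ∈ sph n) :
    |qf M v| ≤ ∑ i, ∑ j, |M i j| := by
  unfold qf dotProduct mulVec
  calc |∑ i, v i * ((fun j => M i j) ⬝ᵥ v)| ≤ ∑ i, |v i * ((fun j => M i j) ⬝ᵥ v)| :=
        Finset.abs_sum_le_sum_abs _ _
    _ ≤ ∑ i, ∑ j, |M i j| := by
        refine Finset.sum_le_sum fun i _ => ?_
        rw [abs_mul]
        calc |v i| * |(fun j => M i j) ⬝ᵥ v| ≤ 1 * |(fun j => M i j) ⬝ᵥ v| :=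
              mul_le_mul_of_nonneg_right (sph_abs_le hv i) (abs_nonneg _)
          _ = |∑ j, M i j * v j| := by rw [one_mul]; rfl
          _ ≤ ∑ j, |M i j * v j| := Finset.abs_sum_le_sum_abs _ _
          _ ≤ ∑ j, |M i j| := by
              refine Finset.sum_le_sum fun j _ => ?_
              rw [abs_mul]
              exact mul_le_of_le_one_right (abs_nonneg _) (sph_abs_le hv j)

lemma qf_add (M N : Matrix (Fin n) (Fin n) ℝ) (t : ℝ) (v : Fin n → ℝ) :
    qf (M + t • N) v = qf M v + t * qf N v := by
  unfold qf
  rw [add_mulVec, dotProduct_add, smul_mulVec, dotProduct_smul, smul_eq_mul]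

lemma qf_smul_vec (M : Matrix (Fin n) (Fin n) ℝ) (a : ℝ) (v : Fin n → ℝ) :
    qf M (a • v) = a ^ 2 * qf M v := by
  unfold qf
  rw [mulVec_smul, dotProduct_smul, smul_dotProduct, smul_eq_mul, smul_eq_mul]
  ring

lemma herm_smul {M : Matrix (Fin n) (Fin n) ℝ} (hM : M.IsHermitian) (c : ℝ) :
    (c • M).IsHermitian := by
  unfold Matrix.IsHermitian at *
  rw [conjTranspose_smul, hM, star_trivial]

lemma aux_smul_one_sub_psd {M : Matrix (Fin n) (Fin n) ℝ} (hM : M.IsHermitian) {c : ℝ}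
    (h : ∀ i, hM.eigenvalues i ≤ c) :
    (c • (1 : Matrix (Fin n) (Fin n) ℝ) - M).PosSemidef := by
  have key : c • (1 : Matrix (Fin n) (Fin n) ℝ) - M
      = (hM.eigenvectorUnitary : Matrix (Fin n) (Fin n) ℝ) *
        diagonal (fun i => c - hM.eigenvalues i) *
        star (hM.eigenvectorUnitary : Matrix (Fin n) (Fin n) ℝ) := by
    have hd : diagonal (fun i : Fin n => c - hM.eigenvalues i)
        = c • (1 : Matrix (Fin n) (Fin n) ℝ) - diagonal (RCLike.ofReal ∘ hM.eigenvalues) := by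
      ext i j
      by_cases hij : i = j <;> simp [hij, Matrix.one_apply, RCLike.ofReal]
    have hU : (hM.eigenvectorUnitary : Matrix (Fin n) (Fin n) ℝ) *
        star (hM.eigenvectorUnitary : Matrix (Fin n) (Fin n) ℝ) = 1 :=
      Matrix.mem_unitaryGroup_iff.mp hM.eigenvectorUnitary.2
    rw [hd, Matrix.mul_sub, Matrix.sub_mul, Matrix.mul_smul, Matrix.smul_mul, mul_one, hU]
    exact congrArg _ hM.spectral_theorem
  rw [key]
  exact (posSemidef_diagonal_iff.mpr fun i => sub_nonneg.mpr (h i)).mul_mul_conjTranspose_same _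

lemma aux_sub_smul_one_psd {M : Matrix (Fin n) (Fin n) ℝ} (hM : M.IsHermitian) {c : ℝ}
    (h : ∀ i, c ≤ hM.eigenvalues i) :
    (M - c • (1 : Matrix (Fin n) (Fin n) ℝ)).PosSemidef := by
  have key : M - c • (1 : Matrix (Fin n) (Fin n) ℝ)
      = (hM.eigenvectorUnitary : Matrix (Fin n) (Fin n) ℝ) *
        diagonal (fun i => hM.eigenvalues i - c) *
        star (hM.eigenvectorUnitary : Matrix (Fin n) (Fin n) ℝ) := by
    have hd : diagonal (fun i : Fin n => hM.eigenvalues i - c)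
        = diagonal (RCLike.ofReal ∘ hM.eigenvalues) - c • (1 : Matrix (Fin n) (Fin n) ℝ) := by
      ext i j
      by_cases hij : i = j <;> simp [hij, Matrix.one_apply, RCLike.ofReal]
    have hU : (hM.eigenvectorUnitary : Matrix (Fin n) (Fin n) ℝ) *
        star (hM.eigenvectorUnitary : Matrix (Fin n) (Fin n) ℝ) = 1 :=
      Matrix.mem_unitaryGroup_iff.mp hM.eigenvectorUnitary.2
    rw [hd, Matrix.mul_sub, Matrix.sub_mul, Matrix.mul_smul, Matrix.smul_mul, mul_one, hU]
    exact congrArg (· - _) hM.spectral_theorem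
  rw [key]
  exact (posSemidef_diagonal_iff.mpr fun i => sub_nonneg.mpr (h i)).mul_mul_conjTranspose_same _

/-- Key lemma: if `Phat` solves the Lyapunov equation with RHS `-1` and `R1` (symmetric)
solves it with RHS `-S`, `S` PSD, then `R1` is PSD. -/
lemma key_psd [NeZero n] (A Phat R1 S : Matrix (Fin n) (Fin n) ℝ)
    (hPhat : Phat.PosDef) (hR1 : R1.IsHermitian) (hS : S.PosSemidef)
    (hLy1 : Aᵀ * Phat + Phat * A = -(1 : Matrix (Fin n) (Fin n) ℝ))
    (hLy2 : Aᵀ * R1 + R1 * A = -S) : R1.PosSemidef := by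
  set B : Matrix (Fin n) (Fin n) ℝ := R1 - Phat with hB
  set R : ℝ → Matrix (Fin n) (Fin n) ℝ := fun t => Phat + t • B with hRdef
  set C : ℝ := ∑ i, ∑ j, |B i j| with hC
  have hCnn : 0 ≤ C := Finset.sum_nonneg fun i _ => Finset.sum_nonneg fun j _ => abs_nonneg _
  -- the min function
  set m : ℝ → ℝ := fun t => sInf (qf (R t) '' sph n) with hm
  have himg_ne : ∀ t : ℝ, (qf (R t) '' sph n).Nonempty := fun t => sph_nonempty.image _
  have hbdd : ∀ t : ℝ, BddBelow (qf (R t) '' sph n) := by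
    intro t
    refine ⟨-(∑ i, ∑ j, |(R t) i j|), ?_⟩
    rintro y ⟨v, hv, rfl⟩
    exact neg_le_of_abs_le (qf_abs_le hv)
  have m_le : ∀ t : ℝ, ∀ v ∈ sph n, m t ≤ qf (R t) v := fun t v hv =>
    csInf_le (hbdd t) ⟨v, hv, rfl⟩
  have le_m : ∀ t : ℝ, ∀ b : ℝ, (∀ v ∈ sph n, b ≤ qf (R t) v) → b ≤ m t := fun t b h =>
    le_csInf (himg_ne t) (by rintro y ⟨v, hv, rfl⟩; exact h v hv)
  have hqfR : ∀ t : ℝ, ∀ v, qf (R t) v = qf Phat v + t * qf B v := fun t v => qf_add _ _ _ _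
  -- Lipschitz estimate
  have hlip : ∀ t s : ℝ, m t ≤ m s + C * |t - s| := by
    intro t s
    have : m t - C * |t - s| ≤ m s := by
      refine le_m s _ fun v hv => ?_
      have h1 : m t ≤ qf (R t) v := m_le t v hv
      have h2 : qf (R t) v = qf (R s) v + (t - s) * qf B v := by
        rw [hqfR, hqfR]; ring
      have h3 : (t - s) * qf B v ≤ C * |t - s| := by
        calc (t - s) * qf B v ≤ |(t - s) * qf B v| := le_abs_self _
          _ = |t - s| * |qf B v| := abs_mul _ _
          _ ≤ |t - s| * C := mul_le_mul_of_nonneg_left (qf_abs_le hv) (abs_nonneg _)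
          _ = C * |t - s| := mul_comm _ _
      linarith
    linarith
  have hmcont : Continuous m := by
    refine (LipschitzWith.of_dist_le_mul (K := Real.toNNReal C) (f := m) ?_).continuous
    intro t s
    rw [Real.dist_eq, Real.dist_eq, Real.coe_toNNReal C hCnn]
    rw [abs_sub_le_iff]
    constructor
    · have := hlip t s; linarith
    · have := hlip s t; rw [abs_sub_comm]; linarith
  -- suppose not PSD
  by_contra hcon
  have hRherm : ∀ t : ℝ, (R t).IsHermitian :=
    fun t => hPhat.1.add (herm_smul (hR1.sub hPhat.1) t)
  obtain ⟨x, hx⟩ : ∃ x : Fin n → ℝ, ¬ (0 ≤ x ⬝ᵥ (R1 *ᵥ x)) := by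
    by_contra hall
    push_neg at hall
    exact hcon (PosSemidef.of_dotProduct_mulVec_nonneg hR1 fun x => by simpa using hall x)
  push_neg at hx
  have hxne : x ≠ 0 := by
    rintro rfl
    simp at hx
  have hxx : 0 < x ⬝ᵥ x := by
    simpa using dotProduct_star_self_pos_iff.mpr hxne
  set a : ℝ := (Real.sqrt (x ⬝ᵥ x))⁻¹ with ha
  have hsq : Real.sqrt (x ⬝ᵥ x) > 0 := Real.sqrt_pos.mpr hxx
  have hapos : 0 < a := inv_pos.mpr hsq
  set u : Fin n → ℝ := a • x with hu
  have husph : u ∈ sph n := by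
    show (a • x) ⬝ᵥ (a • x) = 1
    rw [smul_dotProduct, dotProduct_smul, smul_eq_mul, smul_eq_mul]
    rw [ha]
    rw [← Real.sqrt_mul_self (le_of_lt hxx)] -- x⬝ᵥx = √ * √
    field_simp
    rw [Real.sq_sqrt (Real.sqrt_nonneg _)]
  have hqfu : qf R1 u < 0 := by
    rw [hu, qf_smul_vec]
    exact mul_neg_of_pos_of_neg (by positivity) hx
  -- m 1 < 0
  have hR1eq : R 1 = R1 := by rw [hRdef]; simp [hB]
  have hm1 : m 1 < 0 := lt_of_le_of_lt (by rw [← hR1eq] at hqfu ⊢; exact m_le 1 u husph) hqfu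
  -- m 0 > 0
  have hR0eq : R 0 = Phat := by rw [hRdef]; simp
  set c0 : ℝ := Finset.univ.inf' Finset.univ_nonempty hPhat.1.eigenvalues with hc0
  have hc0pos : 0 < c0 := by
    obtain ⟨i, _, hi⟩ := Finset.exists_mem_eq_inf' Finset.univ_nonempty hPhat.1.eigenvalues
    rw [hc0, hi]
    exact hPhat.eigenvalues_pos i
  have hm0 : 0 < m 0 := by
    refine lt_of_lt_of_le hc0pos (le_m 0 c0 fun v hv => ?_)
    have hle : ∀ i, c0 ≤ hPhat.1.eigenvalues i := fun i => by
      rw [hc0]; exact Finset.inf'_le _ (Finset.mem_univ i)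
    have hpsd := aux_sub_smul_one_psd hPhat.1 hle
    have := hpsd.dotProduct_mulVec_nonneg v
    simp only [star_trivial, sub_mulVec, dotProduct_sub, smul_mulVec, one_mulVec,
      dotProduct_smul, smul_eq_mul] at this
    rw [hR0eq]
    unfold qf
    have hv1 : v ⬝ᵥ v = 1 := hv
    rw [hv1, mul_one] at this
    linarith
  -- IVT
  obtain ⟨t₀, ht₀mem, ht₀⟩ := intermediate_value_Icc' (zero_le_one) hmcont.continuousOn
    (Set.mem_Icc.mpr ⟨le_of_lt hm1, le_of_lt hm0⟩)
  obtain ⟨ht₀0, ht₀1⟩ := Set.mem_Icc.mp ht₀mem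
  have ht₀lt1 : t₀ < 1 := by
    rcases lt_or_eq_of_le ht₀1 with h | h
    · exact h
    · exfalso; rw [h] at ht₀; rw [ht₀] at hm1; exact lt_irrefl 0 hm1
  -- R t₀ is PSD
  have hRt₀psd : (R t₀).PosSemidef := by
    refine PosSemidef.of_dotProduct_mulVec_nonneg (hRherm t₀) fun y => ?_
    rcases eq_or_ne y 0 with rfl | hyne
    · simp
    have hyy : 0 < y ⬝ᵥ y := by simpa using dotProduct_star_self_pos_iff.mpr hyne
    set b : ℝ := (Real.sqrt (y ⬝ᵥ y))⁻¹ with hb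
    have hbpos : 0 < b := inv_pos.mpr (Real.sqrt_pos.mpr hyy)
    have hysph : b • y ∈ sph n := by
      show (b • y) ⬝ᵥ (b • y) = 1
      rw [smul_dotProduct, dotProduct_smul, smul_eq_mul, smul_eq_mul, hb,
        ← Real.sqrt_mul_self (le_of_lt hyy)]
      field_simp
      rw [Real.sq_sqrt (Real.sqrt_nonneg _)]
    have h1 : (0:ℝ) ≤ qf (R t₀) (b • y) := ht₀ ▸ m_le t₀ _ hysph
    rw [qf_smul_vec] at h1
    have hb2 : 0 < b ^ 2 := by positivity
    have : 0 ≤ qf (R t₀) y := by by_contra hq; push_neg at hq; nlinarith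
    simpa [qf] using this
  -- attainment of the min at t₀
  obtain ⟨v₀, hv₀sph, hv₀min⟩ := sph_compact.exists_isMinOn sph_nonempty
    (qf_continuous (R t₀)).continuousOn
  have hv₀val : qf (R t₀) v₀ = 0 := by
    have h1 : qf (R t₀) v₀ ≤ m t₀ := le_m t₀ _ fun v hv => hv₀min hv
    have h2 : m t₀ ≤ qf (R t₀) v₀ := m_le t₀ v₀ hv₀sph
    linarith [ht₀.le, ht₀.ge]
  have hv₀ne : v₀ ≠ 0 := by
    rintro rfl
    have : (0 : Fin n → ℝ) ⬝ᵥ (0 : Fin n → ℝ) = 1 := hv₀sph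
    simp at this
  have hker : R t₀ *ᵥ v₀ = 0 := by
    have := (hRt₀psd.dotProduct_mulVec_zero_iff v₀).mp
    apply this
    simpa [qf] using hv₀val
  -- Lyapunov equation for R t₀
  have hLyT : Aᵀ * R t₀ + R t₀ * A
      = -((1 - t₀) • (1 : Matrix (Fin n) (Fin n) ℝ) + t₀ • S) := by
    have e1 : Aᵀ * (Phat + t₀ • B) + (Phat + t₀ • B) * A
        = (Aᵀ * Phat + Phat * A) + t₀ • ((Aᵀ * R1 + R1 * A) - (Aᵀ * Phat + Phat * A)) := by
      simp only [hB, mul_add, add_mul, Matrix.mul_smul, Matrix.smul_mul, mul_sub, sub_mul]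
      module
    rw [hRdef]
    rw [e1, hLy1, hLy2]
    module
  -- the positive definite matrix T t₀
  have hTpd : ((1 - t₀) • (1 : Matrix (Fin n) (Fin n) ℝ) + t₀ • S).PosDef := by
    have h1 : ((1 - t₀) • (1 : Matrix (Fin n) (Fin n) ℝ)).PosDef := by
      rw [smul_one_eq_diagonal]
      exact posDef_diagonal_iff.mpr fun i => by simpa using sub_pos.mpr ht₀lt1
    have h2 : (t₀ • S).PosSemidef := by
      refine PosSemidef.of_dotProduct_mulVec_nonneg (herm_smul hS.1 t₀) fun y => ?_
      have := hS.dotProduct_mulVec_nonneg y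
      simp only [smul_mulVec, dotProduct_smul, smul_eq_mul]
      exact mul_nonneg ht₀0 (by simpa using this)
    exact h1.add_posSemidef h2
  -- contradiction
  have hzero : v₀ ⬝ᵥ (((1 - t₀) • (1 : Matrix (Fin n) (Fin n) ℝ) + t₀ • S) *ᵥ v₀) = 0 := by
    have h1 : v₀ ⬝ᵥ ((Aᵀ * R t₀ + R t₀ * A) *ᵥ v₀) = 0 := by
      rw [add_mulVec, dotProduct_add]
      have ha : (Aᵀ * R t₀) *ᵥ v₀ = 0 := by rw [← mulVec_mulVec, hker, mulVec_zero]
      have hb2 : v₀ ⬝ᵥ ((R t₀ * A) *ᵥ v₀) = 0 := by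
        rw [← mulVec_mulVec, dotProduct_mulVec, ← mulVec_transpose]
        have hsym : (R t₀)ᵀ = R t₀ := by
          have := (hRherm t₀).eq
          simpa using this
        rw [hsym, hker]
        simp
      rw [ha, hb2, dotProduct_zero, add_zero]
    rw [hLyT] at h1
    rw [neg_mulVec, dotProduct_neg] at h1
    linarith [h1]
  have := hTpd.dotProduct_mulVec_pos hv₀ne
  rw [star_trivial] at this
  rw [hzero] at this
  exact lt_irrefl 0 this

theorem stmt_19 {n : ℕ} [NeZero n] (A Phat P Q : Matrix (Fin n) (Fin n) ℝ)
    (hA : ∀ μ ∈ spectrum ℂ (A.map (Complex.ofReal)), μ.re < 0)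
    (hQ : Q.PosDef) (hPhat : Phat.PosDef) (hP : P.PosDef)
    (hLyapHat : Aᵀ * Phat + Phat * A = -(1 : Matrix (Fin n) (Fin n) ℝ))
    (hLyap : Aᵀ * P + P * A = -Q) :
    Finset.univ.sup' Finset.univ_nonempty hPhat.1.eigenvalues ≤
      (Finset.univ.sup' Finset.univ_nonempty hP.1.eigenvalues) /
        (Finset.univ.inf' Finset.univ_nonempty hQ.1.eigenvalues) := by
  set c : ℝ := Finset.univ.inf' Finset.univ_nonempty hQ.1.eigenvalues with hc
  set lP : ℝ := Finset.univ.sup' Finset.univ_nonempty hP.1.eigenvalues with hlP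
  set lH : ℝ := Finset.univ.sup' Finset.univ_nonempty hPhat.1.eigenvalues with hlH
  have hcpos : 0 < c := by
    obtain ⟨i, _, hi⟩ := Finset.exists_mem_eq_inf' Finset.univ_nonempty hQ.1.eigenvalues
    rw [hc, hi]
    exact hQ.eigenvalues_pos i
  -- S = Q - c • 1 is PSD
  have hS : (Q - c • (1 : Matrix (Fin n) (Fin n) ℝ)).PosSemidef :=
    aux_sub_smul_one_psd hQ.1 fun i => by
      rw [hc]; exact Finset.inf'_le _ (Finset.mem_univ i)
  -- R1 = P - c • Phat solves Lyapunov with RHS -(Q - c•1)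
  have hR1herm : (P - c • Phat).IsHermitian := hP.1.sub (herm_smul hPhat.1 c)
  have hLy2 : Aᵀ * (P - c • Phat) + (P - c • Phat) * A
      = -(Q - c • (1 : Matrix (Fin n) (Fin n) ℝ)) := by
    have e1 : Aᵀ * (P - c • Phat) + (P - c • Phat) * A
        = (Aᵀ * P + P * A) - c • (Aᵀ * Phat + Phat * A) := by
      simp only [mul_sub, sub_mul, Matrix.mul_smul, Matrix.smul_mul]
      module
    rw [e1, hLyap, hLyapHat]
    module
  have hR1psd : (P - c • Phat).PosSemidef :=
    key_psd A Phat (P - c • Phat) (Q - c • (1 : Matrix (Fin n) (Fin n) ℝ))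
      hPhat hR1herm hS hLyapHat hLy2
  -- eigenvector of Phat with maximal eigenvalue
  obtain ⟨j, _, hj⟩ := Finset.exists_mem_eq_sup' Finset.univ_nonempty hPhat.1.eigenvalues
  set v : Fin n → ℝ := ⇑(hPhat.1.eigenvectorBasis j) with hv
  have hmv : Phat *ᵥ v = hPhat.1.eigenvalues j • v := hPhat.1.mulVec_eigenvectorBasis j
  have heig : hPhat.1.eigenvalues j = v ⬝ᵥ (Phat *ᵥ v) := by
    have := hPhat.1.eigenvalues_eq j
    simpa using this
  have hjpos : 0 < hPhat.1.eigenvalues j := hPhat.eigenvalues_pos j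
  have hvv : v ⬝ᵥ v = 1 := by
    have h1 : hPhat.1.eigenvalues j * 1 = hPhat.1.eigenvalues j * (v ⬝ᵥ v) := by
      rw [mul_one]
      conv_lhs => rw [heig, hmv]
      rw [dotProduct_smul, smul_eq_mul]
    exact (mul_left_cancel₀ (ne_of_gt hjpos) h1).symm
  -- bounds
  have hbound1 : c * hPhat.1.eigenvalues j ≤ v ⬝ᵥ (P *ᵥ v) := by
    have := hR1psd.dotProduct_mulVec_nonneg v
    rw [star_trivial, sub_mulVec, dotProduct_sub, smul_mulVec, dotProduct_smul,
      smul_eq_mul, ← heig] at this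
    linarith
  have hbound2 : v ⬝ᵥ (P *ᵥ v) ≤ lP := by
    have hpsd := aux_smul_one_sub_psd (c := lP) hP.1 fun i =>
      Finset.le_sup' hP.1.eigenvalues (Finset.mem_univ i)
    have := hpsd.dotProduct_mulVec_nonneg v
    rw [star_trivial, sub_mulVec, dotProduct_sub, smul_mulVec, one_mulVec,
      dotProduct_smul, smul_eq_mul, hvv, mul_one] at this
    linarith
  rw [le_div_iff₀ hcpos]
  calc lH * c = c * hPhat.1.eigenvalues j := by rw [hlH, hj]; ring
    _ ≤ v ⬝ᵥ (P *ᵥ v) := hbound1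
    _ ≤ lP := hbound2
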